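/- If S ⊆ 𝒲 is infinite and contains no facing triple, then S contains a chain: there is an injective sequence (c_n)_{n∈ℕ} of walls of S such that c_n separates c_{n−1} and c_{n+1} for every n ≥ 1. -/

import Mathlib

open Set

variable {X : Type*}

/-- A wall: a subset with nonempty complement and nonempty itself. -/
def IsWall (h : Set X) : Prop := h.Nonempty ∧ hᶜ.Nonempty

/-- Walls `h` and `k` cross. -/
def Crosses (h k : Set X) : Prop :=
  (h ∩ k).Nonempty ∧ (h ∩ kᶜ).Nonempty ∧ (hᶜ ∩ k).Nonempty ∧ (hᶜ ∩ kᶜ).Nonempty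

/-- The wall `u` lies in the halfspace `H` of the wall `w`. -/
def LiesIn (u H w : Set X) : Prop := u ≠ w ∧ (u ⊆ H ∨ uᶜ ⊆ H)

/-- The wall `w` separates the walls `u` and `v`. -/
def Separates (w u v : Set X) : Prop :=
  u ≠ v ∧ u ≠ w ∧ v ≠ w ∧
  ∃ u' v' w', (u' = u ∨ u' = uᶜ) ∧ (v' = v ∨ v' = vᶜ) ∧ (w' = w ∨ w' = wᶜ) ∧
    u' ⊆ w' ∧ v' ⊆ w'ᶜ

/-- `S` contains a facing triple. -/
def HasFacingTriple (S : Set (Set X)) : Prop :=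
  ∃ a ∈ S, ∃ b ∈ S, ∃ c ∈ S, a ≠ b ∧ a ≠ c ∧ b ≠ c ∧
    ∃ a' b' c', (a' = a ∨ a' = aᶜ) ∧ (b' = b ∨ b' = bᶜ) ∧ (c' = c ∨ c' = cᶜ) ∧
      Disjoint a' b' ∧ Disjoint a' c' ∧ Disjoint b' c'

/-- `S` is inseparable with respect to the wall collection `W`. -/
def InseparableIn (W S : Set (Set X)) : Prop :=
  ∀ u ∈ S, ∀ v ∈ S, ∀ w ∈ W, Separates w u v → w ∈ S

/-- `S` is unidirectional: for each wall `w ∈ S`, at most one of the two halfspaces of `w`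
contains infinitely many walls of `S`. -/
def Unidirectional (S : Set (Set X)) : Prop :=
  ∀ w ∈ S, {u ∈ S | LiesIn u w w}.Finite ∨ {u ∈ S | LiesIn u wᶜ w}.Finite

/-- `V` is a UBS in the wall collection `W`. -/
def IsUBS (W V : Set (Set X)) : Prop :=
  V ⊆ W ∧ V.Infinite ∧ InseparableIn W V ∧ Unidirectional V ∧ ¬ HasFacingTriple V

/-- Almost-equivalence of sets of walls. -/
def AlmostEq (S T : Set (Set X)) : Prop := (S \ T).Finite ∧ (T \ S).Finite

/-- `U` is a minimal UBS in `W`. -/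
def MinUBS (W U : Set (Set X)) : Prop :=
  IsUBS W U ∧ ∀ U', IsUBS W U' → U' ⊆ U → AlmostEq U' U

/-- `A ≺ B`: every wall of `B` crosses all but finitely many walls of `A`. -/
def Prec (A B : Set (Set X)) : Prop := ∀ b ∈ B, {a ∈ A | ¬ Crosses b a}.Finite

/-- Distinct members of `W` determine distinct partitions. -/
def Admissible (W : Set (Set X)) : Prop := ∀ h ∈ W, ∀ k ∈ W, h ≠ k → h ≠ kᶜ

/-- No infinite subset of `W` consists of pairwise-crossing walls. -/
def NoInfCross (W : Set (Set X)) : Prop := ∀ S ⊆ W, S.Pairwise Crosses → S.Finite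

/-- `W` has dimension at most `D`: every pairwise-crossing subset has cardinality at most `D`. -/
def DimLE (W : Set (Set X)) (D : ℕ) : Prop :=
  ∀ S ⊆ W, S.Pairwise Crosses → S.Finite ∧ S.ncard ≤ D

/-- `c` is a chain: an injective sequence of walls with `c n` separating `c (n-1)` and
`c (n+1)` for `n ≥ 1`. -/
def IsChainSeq (c : ℕ → Set X) : Prop :=
  Function.Injective c ∧ ∀ n, Separates (c (n + 1)) (c n) (c (n + 2))

/-- The chain `c` is inextensible in `S`: no wall of `S` has a halfspace containing every
term of `c`. -/
def InextensibleIn (S : Set (Set X)) (c : ℕ → Set X) : Prop :=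
  ¬ ∃ w ∈ S, ∃ H, (H = w ∨ H = wᶜ) ∧ ∀ n, LiesIn (c n) H w

/-- The inseparable closure in `W` of a set `C` of walls. -/
def insepClosure (W C : Set (Set X)) : Set (Set X) :=
  ⋂₀ {S | C ⊆ S ∧ S ⊆ W ∧ InseparableIn W S}

lemma ramsey_step (col : ℕ → ℕ → Fin 5) {A : Set ℕ} (hA : A.Infinite) :
    ∃ p : ℕ × Fin 5, p.1 ∈ A ∧ {x ∈ A | p.1 < x ∧ col p.1 x = p.2}.Infinite := by
  obtain ⟨a, ha⟩ := hA.nonempty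
  by_contra h
  push_neg at h
  have hfin : ∀ c : Fin 5, {x ∈ A | a < x ∧ col a x = c}.Finite := by
    intro c
    exact h (a, c) ha
  have hsub : A ⊆ (Set.Iic a) ∪ ⋃ c : Fin 5, {x ∈ A | a < x ∧ col a x = c} := by
    intro x hx
    rcases le_or_gt x a with h' | h'
    · exact Or.inl h'
    · exact Or.inr (Set.mem_iUnion.2 ⟨col a x, hx, h', rfl⟩)
  exact hA (((Set.finite_Iic a).union (Set.finite_iUnion hfin)).subset hsub)

lemma ramsey5 (col : ℕ → ℕ → Fin 5) :
    ∃ f : ℕ → ℕ, StrictMono f ∧ ∃ c, ∀ i j, i < j → col (f i) (f j) = c := by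
  classical
  have step := fun (A : {A : Set ℕ // A.Infinite}) => ramsey_step col A.2
  choose p hmem hinf using step
  let st : ℕ → {A : Set ℕ // A.Infinite} := fun n =>
    Nat.rec ⟨Set.univ, Set.infinite_univ⟩
      (fun _ A => ⟨{x ∈ A.1 | (p A).1 < x ∧ col (p A).1 x = (p A).2}, hinf A⟩) n
  set a : ℕ → ℕ := fun n => (p (st n)).1 with ha
  set κ : ℕ → Fin 5 := fun n => (p (st n)).2 with hκ
  have hst : ∀ n, (st (n+1)).1 = {x ∈ (st n).1 | a n < x ∧ col (a n) x = κ n} := fun n => rfl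
  have hsubset : ∀ n m, n ≤ m → (st m).1 ⊆ (st n).1 := by
    intro n m hnm
    induction m with
    | zero => simp_all
    | succ k ih =>
      rcases Nat.lt_or_ge n (k+1) with h' | h'
      · intro x hx
        rw [hst k] at hx
        exact ih (Nat.lt_succ_iff.1 h') hx.1
      · have : n = k + 1 := le_antisymm hnm h'
        subst this; exact fun x hx => hx
  have key : ∀ i j, i < j → a i < a j ∧ col (a i) (a j) = κ i := by
    intro i j hij
    have h1 : a j ∈ (st j).1 := hmem (st j)
    have h2 : a j ∈ (st (i+1)).1 := hsubset (i+1) j hij h1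
    rw [hst i] at h2
    exact ⟨h2.2.1, h2.2.2⟩
  obtain ⟨c, hc⟩ := Finite.exists_infinite_fiber κ
  haveI : Infinite ↥(κ ⁻¹' {c}) := hc
  let g := Nat.Subtype.orderIsoOfNat (κ ⁻¹' {c})
  have hg : StrictMono (fun n => (g n : ℕ)) := fun i j hij => g.strictMono hij
  refine ⟨fun n => a (g n : ℕ), ?_, c, ?_⟩
  · intro i j hij
    exact (key _ _ (hg hij)).1
  · intro i j hij
    have h1 := (key _ _ (hg hij)).2
    have h2 : κ (g i : ℕ) = c := (g i).2
    rw [h1, h2]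

lemma crosses_symm {h k : Set X} (hc : Crosses h k) : Crosses k h := by
  obtain ⟨a, b, c, d⟩ := hc
  exact ⟨by rwa [Set.inter_comm], by rwa [Set.inter_comm], by rwa [Set.inter_comm],
    by rwa [Set.inter_comm]⟩

/-- Any infinite set of walls with no facing triple contains a chain. -/
theorem infinite_no_facing_triple_contains_chain (W : Set (Set X))
    (hWc : W.Countable) (hWwall : ∀ h ∈ W, IsWall h)
    (hWadm : Admissible W) (hWnic : NoInfCross W)
    (S : Set (Set X)) (hSW : S ⊆ W) (hSinf : S.Infinite)
    (hft : ¬ HasFacingTriple S) :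
    ∃ c : ℕ → Set X, Function.Injective c ∧ (∀ n, c n ∈ S) ∧
      ∀ n, Separates (c (n + 1)) (c n) (c (n + 2)) := by
  classical
  -- an injective sequence in S
  let e := hSinf.natEmbedding
  let s : ℕ → Set X := fun n => (e n : Set X)
  have hsinj : Function.Injective s := fun i j h => e.injective (Subtype.ext h)
  have hsS : ∀ n, s n ∈ S := fun n => (e n).2
  -- the coloring
  let col : ℕ → ℕ → Fin 5 := fun i j =>
    if Crosses (s i) (s j) then 0
    else if s i ⊆ s j then 1
    else if s j ⊆ s i then 2
    else if Disjoint (s i) (s j) then 3 else 4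
  have colcases : ∀ i j,
      (col i j = 0 → Crosses (s i) (s j)) ∧ (col i j = 1 → s i ⊆ s j) ∧
      (col i j = 2 → s j ⊆ s i) ∧ (col i j = 3 → Disjoint (s i) (s j)) ∧
      (col i j = 4 → Disjoint (s i)ᶜ (s j)ᶜ) := by
    intro i j
    by_cases h0 : Crosses (s i) (s j)
    · simp [col, h0]
    by_cases h1 : s i ⊆ s j
    · simp [col, h0, h1]
    by_cases h2 : s j ⊆ s i
    · simp [col, h0, h1, h2]
    by_cases h3 : Disjoint (s i) (s j)
    · simp [col, h0, h1, h2, h3]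
    · simp only [col, h0, h1, h2, h3, if_false]
      refine ⟨by simp, by simp, by simp, by simp, fun _ => ?_⟩
      rw [Set.disjoint_iff_inter_eq_empty]
      by_contra hne
      apply h0
      obtain ⟨x, hx1, hx2⟩ := Set.not_subset.1 h1
      obtain ⟨y, hy1, hy2⟩ := Set.not_subset.1 h2
      exact ⟨Set.not_disjoint_iff_nonempty_inter.1 h3, ⟨x, hx1, hx2⟩, ⟨y, hy2, hy1⟩,
        Set.nonempty_iff_ne_empty.2 hne⟩
  obtain ⟨f, hfmono, c, hcol⟩ := ramsey5 col
  set cs : ℕ → Set X := fun n => s (f n) with hcs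
  have hinj : Function.Injective cs := hsinj.comp hfmono.injective
  have hmem : ∀ n, cs n ∈ S := fun n => hsS (f n)
  have hne : ∀ i j : ℕ, i ≠ j → cs i ≠ cs j := fun i j h => fun h' => h (hinj h')
  fin_cases c
  · -- all crossing: contradicts NoInfCross
    exfalso
    have hrange : Set.range cs ⊆ W := by
      rintro x ⟨n, rfl⟩; exact hSW (hmem n)
    have hpair : (Set.range cs).Pairwise Crosses := by
      rintro x ⟨n, rfl⟩ y ⟨m, rfl⟩ hxy
      rcases lt_trichotomy n m with h | h | h
      · exact (colcases (f n) (f m)).1 (hcol n m h)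
      · exact absurd (congrArg cs h) hxy
      · exact crosses_symm ((colcases (f m) (f n)).1 (hcol m n h))
    exact (Set.infinite_range_of_injective hinj) (hWnic _ hrange hpair)
  · -- nested increasing: chain
    refine ⟨cs, hinj, hmem, fun n => ?_⟩
    have h01 : cs n ⊆ cs (n+1) := (colcases (f n) (f (n+1))).2.1 (hcol n (n+1) (by omega))
    have h12 : cs (n+1) ⊆ cs (n+2) := (colcases (f (n+1)) (f (n+2))).2.1 (hcol (n+1) (n+2) (by omega))
    exact ⟨hne n (n+2) (by omega), hne n (n+1) (by omega), hne (n+2) (n+1) (by omega),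
      cs n, (cs (n+2))ᶜ, cs (n+1), Or.inl rfl, Or.inr rfl, Or.inl rfl, h01,
      Set.compl_subset_compl.2 h12⟩
  · -- nested decreasing: chain
    refine ⟨cs, hinj, hmem, fun n => ?_⟩
    have h01 : cs (n+1) ⊆ cs n := (colcases (f n) (f (n+1))).2.2.1 (hcol n (n+1) (by omega))
    have h12 : cs (n+2) ⊆ cs (n+1) := (colcases (f (n+1)) (f (n+2))).2.2.1 (hcol (n+1) (n+2) (by omega))
    refine ⟨hne n (n+2) (by omega), hne n (n+1) (by omega), hne (n+2) (n+1) (by omega),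
      (cs n)ᶜ, cs (n+2), (cs (n+1))ᶜ, Or.inr rfl, Or.inl rfl, Or.inr rfl,
      Set.compl_subset_compl.2 h01, ?_⟩
    rw [compl_compl]
    exact h12
  · -- pairwise disjoint: facing triple
    exfalso
    apply hft
    refine ⟨cs 0, hmem 0, cs 1, hmem 1, cs 2, hmem 2, hne 0 1 (by omega), hne 0 2 (by omega),
      hne 1 2 (by omega), cs 0, cs 1, cs 2, Or.inl rfl, Or.inl rfl, Or.inl rfl, ?_, ?_, ?_⟩
    · exact (colcases (f 0) (f 1)).2.2.2.1 (hcol 0 1 (by omega))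
    · exact (colcases (f 0) (f 2)).2.2.2.1 (hcol 0 2 (by omega))
    · exact (colcases (f 1) (f 2)).2.2.2.1 (hcol 1 2 (by omega))
  · -- pairwise disjoint complements: facing triple
    exfalso
    apply hft
    refine ⟨cs 0, hmem 0, cs 1, hmem 1, cs 2, hmem 2, hne 0 1 (by omega), hne 0 2 (by omega),
      hne 1 2 (by omega), (cs 0)ᶜ, (cs 1)ᶜ, (cs 2)ᶜ, Or.inr rfl, Or.inr rfl, Or.inr rfl, ?_, ?_, ?_⟩
    · exact (colcases (f 0) (f 1)).2.2.2.2 (hcol 0 1 (by omega))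
    · exact (colcases (f 0) (f 2)).2.2.2.2 (hcol 0 2 (by omega))
    · exact (colcases (f 1) (f 2)).2.2.2.2 (hcol 1 2 (by omega))
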